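/- For every n ≥ 2 and every k with 1 ≤ k ≤ n−1, the dynamical Lie algebra generated on the Hamming-weight-k subspace H_{n,k} by the generator set {J̃_{pq} : p, q ∈ {0,…,n−1}, p ≠ q} has real dimension d_k(d_k − 1)/2, where d_k = C(n,k). -/

import Mathlib

open Matrix Complex

noncomputable section

/-- Computational basis labels for `n` qubits: bit strings of length `n`. -/
abbrev QState (n : ℕ) := Fin n → Fin 2

/-- Operators on the `n`-qubit Hilbert space `(ℂ²)^⊗n`, as matrices in the
computational basis. -/
abbrev QOp (n : ℕ) := Matrix (QState n) (QState n) ℂ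

/-- Flip the bit at position `m` of a basis label. -/
def flipBit {n : ℕ} (m : Fin n) (b : QState n) : QState n :=
  Function.update b m (1 - b m)

/-- The Pauli `X` operator acting on qubit `m` (identity elsewhere). -/
def pauliX {n : ℕ} (m : Fin n) : QOp n :=
  Matrix.of fun b b' => if b = flipBit m b' then 1 else 0

/-- The Pauli `Y` operator acting on qubit `m` (identity elsewhere):
`Y|0⟩ = i|1⟩`, `Y|1⟩ = -i|0⟩`. -/
def pauliY {n : ℕ} (m : Fin n) : QOp n :=
  Matrix.of fun b b' =>
    if b = flipBit m b' then (if b' m = 0 then Complex.I else -Complex.I) else 0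

/-- The Pauli `Z` operator acting on qubit `m` (identity elsewhere). -/
def pauliZ {n : ℕ} (m : Fin n) : QOp n :=
  Matrix.of fun b b' => if b = b' then (if b m = 0 then 1 else -1) else 0

/-- `R_{pq} = (X_p X_q + Y_p Y_q)/2`. -/
def opR {n : ℕ} (p q : Fin n) : QOp n :=
  (1/2 : ℂ) • (pauliX p * pauliX q + pauliY p * pauliY q)

/-- `J_{pq} = (X_p Y_q − Y_p X_q)/2`. -/
def opJ {n : ℕ} (p q : Fin n) : QOp n :=
  (1/2 : ℂ) • (pauliX p * pauliY q - pauliY p * pauliX q)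

/-- `E_{pq} = (I − Z_p Z_q)/2`. -/
def opE {n : ℕ} (p q : Fin n) : QOp n :=
  (1/2 : ℂ) • ((1 : QOp n) - pauliZ p * pauliZ q)

/-- `S_{pq} = (Z_p − Z_q)/2`. -/
def opS {n : ℕ} (p q : Fin n) : QOp n :=
  (1/2 : ℂ) • (pauliZ p - pauliZ q)

/-- Hamming weight of a basis label. -/
def wt {n : ℕ} (b : QState n) : ℕ := ∑ i, (b i : ℕ)

/-- Basis labels of the Hamming-weight-`k` subspace `H_{n,k}`. -/
abbrev HWBasis (n k : ℕ) := {b : QState n // wt b = k}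

/-- Restriction (compression) of an `n`-qubit operator to the Hamming-weight-`k`
subspace; for Hamming-weight-preserving operators this is the restriction. -/
def restrict {n : ℕ} (k : ℕ) (M : QOp n) : Matrix (HWBasis n k) (HWBasis n k) ℂ :=
  Matrix.of fun x y => M x.1 y.1

attribute [local instance 100] LieRing.ofAssociativeRing

/-- The dynamical Lie algebra generated by a set `G` of (Hermitian) operators:
the real Lie algebra generated by `{i·H : H ∈ G}` under commutators and real
linear combinations. -/
def DLA {ι : Type*} [Fintype ι] [DecidableEq ι] (G : Set (Matrix ι ι ℂ)) :
    LieSubalgebra ℝ (Matrix ι ι ℂ) :=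
  LieSubalgebra.lieSpan ℝ _ ((fun H => Complex.I • H) '' G)

/-- The real dimension of the dynamical Lie algebra generated by `G`. -/
def dlaDim {ι : Type*} [Fintype ι] [DecidableEq ι] (G : Set (Matrix ι ι ℂ)) : ℕ :=
  Module.finrank ℝ ↥(DLA G)

/-- The cyclic successor `p + 1 (mod n)` of a qubit index. -/
def cyc {n : ℕ} (p : Fin n) : Fin n :=
  ⟨(p.1 + 1) % n, Nat.mod_lt _ (Nat.lt_of_le_of_lt (Nat.zero_le _) p.2)⟩

/-! ### Auxiliary lemmas -/

section Aux

lemma fin2_cases (a : Fin 2) : a = 0 ∨ a = 1 := by omega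

@[simp] lemma flipBit_apply_same {n : ℕ} (m : Fin n) (b : QState n) :
    flipBit m b m = 1 - b m := by simp [flipBit]

lemma flipBit_apply_ne {n : ℕ} (m i : Fin n) (b : QState n) (h : i ≠ m) :
    flipBit m b i = b i := by simp [flipBit, Function.update_apply, h]

@[simp] lemma flipBit_flipBit {n : ℕ} (m : Fin n) (b : QState n) :
    flipBit m (flipBit m b) = b := by
  funext i
  by_cases h : i = m
  · subst h
    simp only [flipBit_apply_same]
    rcases fin2_cases (b i) with hb | hb <;> rw [hb] <;> decide
  · rw [flipBit_apply_ne _ _ _ h, flipBit_apply_ne _ _ _ h]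

lemma flipBit_comm {n : ℕ} (p q : Fin n) (b : QState n) :
    flipBit p (flipBit q b) = flipBit q (flipBit p b) := by
  by_cases hpq : p = q
  · subst hpq; rfl
  funext i
  by_cases hp : i = p
  · subst hp
    rw [flipBit_apply_same, flipBit_apply_ne q i _ (fun h => hpq h),
      flipBit_apply_ne q i _ (fun h => hpq h), flipBit_apply_same]
  · by_cases hq : i = q
    · subst hq
      rw [flipBit_apply_ne p i _ hp, flipBit_apply_same, flipBit_apply_same,
        flipBit_apply_ne p i _ hp]
    · rw [flipBit_apply_ne p i _ hp, flipBit_apply_ne q i _ hq,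
        flipBit_apply_ne q i _ hq, flipBit_apply_ne p i _ hp]

/-- double flip -/
def dflip {n : ℕ} (p q : Fin n) (b : QState n) : QState n := flipBit p (flipBit q b)

lemma dflip_apply_p {n : ℕ} {p q : Fin n} (hpq : p ≠ q) (b : QState n) :
    dflip p q b p = 1 - b p := by
  rw [dflip, flipBit_apply_same, flipBit_apply_ne q p _ hpq]

lemma dflip_apply_q {n : ℕ} {p q : Fin n} (hpq : p ≠ q) (b : QState n) :
    dflip p q b q = 1 - b q := by
  rw [dflip, flipBit_apply_ne p q _ (Ne.symm hpq), flipBit_apply_same]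

lemma dflip_apply_ne {n : ℕ} {p q i : Fin n} (hp : i ≠ p) (hq : i ≠ q) (b : QState n) :
    dflip p q b i = b i := by
  rw [dflip, flipBit_apply_ne p i _ hp, flipBit_apply_ne q i _ hq]

@[simp] lemma dflip_dflip {n : ℕ} (p q : Fin n) (b : QState n) :
    dflip p q (dflip p q b) = b := by
  rw [dflip, dflip, flipBit_comm p q (flipBit p (flipBit q b))]
  simp

lemma dflip_eq_comm {n : ℕ} (p q : Fin n) (a b : QState n) :
    a = dflip p q b ↔ b = dflip p q a := by
  constructor <;> (rintro rfl; simp)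

lemma dflip_dflip_cancel_left {n : ℕ} {p q r : Fin n} (b : QState n) :
    dflip p q (dflip q r b) = dflip p r b := by
  rw [dflip, dflip, dflip, flipBit_flipBit]

lemma dflip_dflip_cancel_right {n : ℕ} {p q r : Fin n} (b : QState n) :
    dflip q r (dflip p q b) = dflip p r b := by
  rw [dflip, dflip, dflip, flipBit_comm r p, flipBit_comm r q, flipBit_comm p q, flipBit_flipBit]

end Aux
section Weight

lemma sum_split {n : ℕ} {p q : Fin n} (hpq : p ≠ q) (f : Fin n → ℕ) :
    ∑ i, f i = f p + (f q + ∑ i ∈ (Finset.univ.erase p).erase q, f i) := by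
  rw [Finset.add_sum_erase _ f (by simp [Ne.symm hpq] : q ∈ Finset.univ.erase p),
    Finset.add_sum_erase _ f (Finset.mem_univ p)]

lemma wt_eq_split {n : ℕ} {p q : Fin n} (hpq : p ≠ q) (b : QState n) :
    wt b = (b p : ℕ) + ((b q : ℕ) + ∑ i ∈ (Finset.univ.erase p).erase q, (b i : ℕ)) :=
  sum_split hpq _

lemma wt_dflip_split {n : ℕ} {p q : Fin n} (hpq : p ≠ q) (b : QState n) :
    wt (dflip p q b) = ((1 - b p : Fin 2) : ℕ) +
      (((1 - b q : Fin 2) : ℕ) + ∑ i ∈ (Finset.univ.erase p).erase q, (b i : ℕ)) := by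
  rw [wt_eq_split hpq, dflip_apply_p hpq, dflip_apply_q hpq]
  congr 2
  apply Finset.sum_congr rfl
  intro i hi
  simp only [Finset.mem_erase] at hi
  rw [dflip_apply_ne hi.2.1 hi.1]

lemma wt_dflip {n : ℕ} {p q : Fin n} (hpq : p ≠ q) {b : QState n} (h : b p ≠ b q) :
    wt (dflip p q b) = wt b := by
  rw [wt_dflip_split hpq, wt_eq_split hpq b]
  rcases fin2_cases (b p) with hp | hp <;> rcases fin2_cases (b q) with hq | hq <;>
      rw [hp, hq] <;>
    first
      | (exact absurd rfl (by rw [hp, hq] at h; exact h))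
      | (norm_num; rfl)
      | norm_num

lemma wt_dflip_both_one {n : ℕ} {p q : Fin n} (hpq : p ≠ q) {b : QState n}
    (h1 : b p = 1) (h2 : b q = 1) :
    wt b = wt (dflip p q b) + 2 := by
  rw [wt_dflip_split hpq, wt_eq_split hpq b, h1, h2]
  norm_num
  omega

end Weight
section Amatrices

variable (n k : ℕ)

/-- Matrix unit `|u⟩⟨v|` compressed to the weight-`k` subspace (zero if `u` or `v`
has the wrong weight). -/
def Eraw (u v : QState n) : Matrix (HWBasis n k) (HWBasis n k) ℂ :=
  Matrix.of fun x y => if x.1 = u ∧ y.1 = v then 1 else 0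

/-- Antisymmetric generator `|u⟩⟨v| - |v⟩⟨u|` compressed to the weight-`k` subspace. -/
def Araw (u v : QState n) : Matrix (HWBasis n k) (HWBasis n k) ℂ :=
  Eraw n k u v - Eraw n k v u

variable {n k}

lemma Eraw_mul {v : QState n} (hv : wt v = k) (u w z : QState n) :
    Eraw n k u v * Eraw n k w z = if v = w then Eraw n k u z else 0 := by
  ext x y
  rw [Matrix.mul_apply]
  by_cases hvw : v = w
  · subst hvw
    rw [if_pos rfl]
    rw [Finset.sum_eq_single (⟨v, hv⟩ : HWBasis n k)]
    · simp only [Eraw, Matrix.of_apply]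
      by_cases h1 : x.1 = u <;> by_cases h2 : y.1 = z <;> simp [h1, h2]
    · intro c _ hc
      have : ¬(c.1 = v) := fun h => hc (Subtype.ext h)
      simp only [Eraw, Matrix.of_apply]
      simp [this]
    · intro h; exact absurd (Finset.mem_univ _) h
  · rw [if_neg hvw]
    apply Finset.sum_eq_zero
    intro c _
    simp only [Eraw, Matrix.of_apply]
    by_cases h1 : c.1 = v
    · have : ¬(c.1 = w) := fun h => hvw (h1 ▸ h ▸ rfl)
      simp [this]
    · simp [h1]

lemma Araw_self (u : QState n) : Araw n k u u = 0 := sub_self _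

lemma Araw_symm (u v : QState n) : Araw n k v u = -Araw n k u v := (neg_sub _ _).symm

lemma lie_Araw {a b c d : QState n} (ha : wt a = k) (hb : wt b = k) (hc : wt c = k)
    (hd : wt d = k) :
    ⁅Araw n k a b, Araw n k c d⁆ =
      (if b = c then Araw n k a d else 0) + (if a = d then Araw n k b c else 0) +
      (if b = d then Araw n k c a else 0) + (if a = c then Araw n k d b else 0) := by
  rw [Ring.lie_def]
  simp only [Araw, sub_mul, mul_sub, Eraw_mul ha, Eraw_mul hb, Eraw_mul hc, Eraw_mul hd]
  simp only [@eq_comm _ d a, @eq_comm _ d b, @eq_comm _ c a, @eq_comm _ c b]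
  split_ifs <;> abel

end Amatrices
section CondB

variable (n k : ℕ)

/-- Conditioned hopping generator. -/
def condB (p q : Fin n) (P : QState n → Prop) [DecidablePred P] :
    Matrix (HWBasis n k) (HWBasis n k) ℂ :=
  ∑ y : HWBasis n k,
    if y.1 p = 0 ∧ y.1 q = 1 ∧ P y.1 then Araw n k (dflip p q y.1) y.1 else 0

variable {n k}

lemma condB_congr {p q : Fin n} {P Q : QState n → Prop} [DecidablePred P] [DecidablePred Q]
    (h : ∀ b, P b ↔ Q b) : condB n k p q P = condB n k p q Q := by
  unfold condB
  apply Finset.sum_congr rfl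
  intro y _
  congr 1
  simp [h y.1]

/-- Collapse of a sum over the weight-`k` basis at one specified label. -/
lemma sum_subtype_ite {M : Type*} [AddCommMonoid M] (g : QState n) (F : HWBasis n k → M) :
    ∑ y : HWBasis n k, (if y.1 = g then F y else 0) =
      if h : wt g = k then F ⟨g, h⟩ else 0 := by
  by_cases h : wt g = k
  · rw [dif_pos h, Finset.sum_eq_single (⟨g, h⟩ : HWBasis n k)]
    · rw [if_pos rfl]
    · intro y _ hy
      rw [if_neg (fun hh => hy (Subtype.ext hh))]
    · intro hh; exact absurd (Finset.mem_univ _) hh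
  · rw [dif_neg h]
    apply Finset.sum_eq_zero
    intro y _
    rw [if_neg (fun hh => h (by rw [← hh]; exact y.2))]

lemma pauliX_mul_pauliY_apply {p q : Fin n} (hpq : p ≠ q) (b b' : QState n) :
    (pauliX p * pauliY q) b b' =
      if b = dflip p q b' then (if b' q = 0 then Complex.I else -Complex.I) else 0 := by
  rw [Matrix.mul_apply]
  rw [Finset.sum_eq_single (flipBit q b')]
  · simp only [pauliX, pauliY, Matrix.of_apply, if_pos rfl, dflip]
    by_cases h : b = flipBit p (flipBit q b') <;> simp [h]
  · intro c _ hc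
    simp only [pauliX, pauliY, Matrix.of_apply, if_neg hc, mul_zero]
  · intro h; exact absurd (Finset.mem_univ _) h

lemma pauliY_mul_pauliX_apply {p q : Fin n} (hpq : p ≠ q) (b b' : QState n) :
    (pauliY p * pauliX q) b b' =
      if b = dflip p q b' then (if b' p = 0 then Complex.I else -Complex.I) else 0 := by
  rw [Matrix.mul_apply]
  rw [Finset.sum_eq_single (flipBit q b')]
  · simp only [pauliY, pauliX, Matrix.of_apply, if_pos rfl, dflip]
    rw [flipBit_apply_ne q p b' hpq]
    by_cases h : b = flipBit p (flipBit q b') <;> simp [h]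
  · intro c _ hc
    simp only [pauliY, pauliX, Matrix.of_apply, if_neg hc, mul_zero]
  · intro h; exact absurd (Finset.mem_univ _) h

lemma opJ_apply {p q : Fin n} (hpq : p ≠ q) (b b' : QState n) :
    opJ p q b b' = if b = dflip p q b' then
      (if b' p = 1 ∧ b' q = 0 then Complex.I
        else if b' p = 0 ∧ b' q = 1 then -Complex.I else 0) else 0 := by
  unfold opJ
  rw [Matrix.smul_apply, Matrix.sub_apply, pauliX_mul_pauliY_apply hpq,
    pauliY_mul_pauliX_apply hpq]
  by_cases h : b = dflip p q b'
  · rw [if_pos h, if_pos h, if_pos h]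
    rcases fin2_cases (b' p) with hp | hp <;> rcases fin2_cases (b' q) with hq | hq <;>
      rw [hp, hq] <;> norm_num <;> ring
  · rw [if_neg h, if_neg h, if_neg h]
    simp

end CondB
section Generator

variable {n k : ℕ}

lemma ite_sub_ite_scalar (C P1 P2 : Prop) [Decidable C] [Decidable P1] [Decidable P2] :
    (if C then ((if P1 then (1:ℂ) else 0) - (if P2 then (1:ℂ) else 0)) else 0) =
      (if C ∧ P1 then (1:ℂ) else 0) - (if C ∧ P2 then (1:ℂ) else 0) := by
  split_ifs <;> simp_all

lemma ite_subtype_eq {z : HWBasis n k} {g : QState n}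
    (hg : g = z.1) (y : HWBasis n k) (Q : HWBasis n k → Prop) [DecidablePred Q] :
    (if (Q y ∧ g = y.1) then (1:ℂ) else 0) =
      (if y = z then (if Q y then (1:ℂ) else 0) else 0) := by
  subst hg
  by_cases hyz : y = z
  · subst hyz; simp
  · rw [if_neg hyz, if_neg (fun h => hyz (Subtype.ext (h.2).symm))]

/-- Entrywise description of `condB`. -/
lemma condB_apply (p q : Fin n) (P : QState n → Prop) [DecidablePred P] (x z : HWBasis n k) :
    condB n k p q P x z =
      (if (z.1 p = 0 ∧ z.1 q = 1 ∧ P z.1) ∧ x.1 = dflip p q z.1 then (1:ℂ) else 0)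
        - (if (x.1 p = 0 ∧ x.1 q = 1 ∧ P x.1) ∧ z.1 = dflip p q x.1 then (1:ℂ) else 0) := by
  rw [condB, Matrix.sum_apply]
  have key : ∀ y : HWBasis n k,
      (if y.1 p = 0 ∧ y.1 q = 1 ∧ P y.1 then Araw n k (dflip p q y.1) y.1 else 0) x z =
      (if y = z then
          (if (y.1 p = 0 ∧ y.1 q = 1 ∧ P y.1) ∧ x.1 = dflip p q y.1 then (1:ℂ) else 0) else 0)
        - (if y = x then
          (if (y.1 p = 0 ∧ y.1 q = 1 ∧ P y.1) ∧ z.1 = dflip p q y.1 then (1:ℂ) else 0)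
          else 0) := by
    intro y
    rw [apply_ite (fun M : Matrix (HWBasis n k) (HWBasis n k) ℂ => M x z)]
    simp only [Araw, Eraw, Matrix.sub_apply, Matrix.of_apply, Matrix.zero_apply]
    rw [ite_sub_ite_scalar]
    congr 1
    · rw [← ite_subtype_eq rfl y
        (fun y' => (y'.1 p = 0 ∧ y'.1 q = 1 ∧ P y'.1) ∧ x.1 = dflip p q y'.1)]
      exact if_congr (by tauto) rfl rfl
    · rw [← ite_subtype_eq rfl y
        (fun y' => (y'.1 p = 0 ∧ y'.1 q = 1 ∧ P y'.1) ∧ z.1 = dflip p q y'.1)]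
      exact if_congr (by tauto) rfl rfl
  rw [Finset.sum_congr rfl (fun y _ => key y), Finset.sum_sub_distrib,
    Finset.sum_ite_eq' Finset.univ z, Finset.sum_ite_eq' Finset.univ x]
  simp only [Finset.mem_univ, if_true]

lemma I_smul_restrict_opJ {p q : Fin n} (hpq : p ≠ q) :
    Complex.I • restrict k (opJ p q) = condB n k p q (fun _ => True) := by
  ext x z
  rw [condB_apply, Matrix.smul_apply]
  show Complex.I * restrict k (opJ p q) x z = _
  rw [restrict, Matrix.of_apply, opJ_apply hpq]
  by_cases hx : x.1 = dflip p q z.1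
  · have hzx : z.1 = dflip p q x.1 := (dflip_eq_comm p q x.1 z.1).mp hx
    have hxp : x.1 p = 1 - z.1 p := by rw [hx, dflip_apply_p hpq]
    have hxq : x.1 q = 1 - z.1 q := by rw [hx, dflip_apply_q hpq]
    rw [if_pos hx]
    have f0 : (1 - 0 : Fin 2) = 1 := by decide
    have f1 : (1 - 1 : Fin 2) = 0 := by decide
    have g01 : ((0 : Fin 2) = 1) ↔ False := by decide
    have g10 : ((1 : Fin 2) = 0) ↔ False := by decide
    rcases fin2_cases (z.1 p) with hzp | hzp <;> rcases fin2_cases (z.1 q) with hzq | hzq <;>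
        rw [hzp] at hxp <;> rw [hzq] at hxq <;>
      simp [hzp, hzq, hxp, hxq, iff_true_intro hx, iff_true_intro hzx, f0, f1, g01, g10,
        Complex.I_mul_I, mul_neg]
  · have hzx : ¬(z.1 = dflip p q x.1) := fun h => hx ((dflip_eq_comm p q z.1 x.1).mp h)
    rw [if_neg hx]
    simp [hx, hzx]

end Generator
section BracketIdentity

variable {n k : ℕ}

lemma fin2_one_sub_eq_one : ∀ a : Fin 2, (1 - a = 1 ↔ a = 0) := by decide
lemma fin2_one_sub_eq_zero : ∀ a : Fin 2, (1 - a = 0 ↔ a = 1) := by decide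
lemma fin2_ne_of_eq01 {a b : Fin 2} (ha : a = 0) (hb : b = 1) : a ≠ b := by
  subst ha; subst hb; decide

lemma lie_sum_sum {ι' : Type*} (s t : Finset ι')
    (f g : ι' → Matrix (HWBasis n k) (HWBasis n k) ℂ) :
    ⁅∑ x ∈ s, f x, ∑ y ∈ t, g y⁆ = ∑ x ∈ s, ∑ y ∈ t, ⁅f x, g y⁆ := by
  have h1 : (∑ x ∈ s, f x) * (∑ y ∈ t, g y) = ∑ x ∈ s, ∑ y ∈ t, f x * g y := by
    rw [Finset.sum_mul]
    exact Finset.sum_congr rfl fun x _ => Finset.mul_sum _ _ _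
  have h2 : (∑ y ∈ t, g y) * (∑ x ∈ s, f x) = ∑ x ∈ s, ∑ y ∈ t, g y * f x := by
    rw [Finset.sum_mul]
    rw [show (∑ y ∈ t, g y * ∑ x ∈ s, f x) = ∑ y ∈ t, ∑ x ∈ s, g y * f x from
      Finset.sum_congr rfl fun y _ => Finset.mul_sum _ _ _]
    exact Finset.sum_comm
  rw [Ring.lie_def, h1, h2, ← Finset.sum_sub_distrib]
  exact Finset.sum_congr rfl fun x _ => by
    rw [← Finset.sum_sub_distrib]
    exact Finset.sum_congr rfl fun y _ => (Ring.lie_def _ _).symm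

/-- Reindexing a weight-`k` sum along a double flip. -/
lemma sum_reindex_dflip {a b : Fin n} (hab : a ≠ b)
    (F : QState n → Matrix (HWBasis n k) (HWBasis n k) ℂ)
    (C : QState n → Prop) [DecidablePred C] (hC : ∀ s, C s → s a ≠ s b) :
    ∑ x : HWBasis n k, (if C x.1 then F x.1 else 0) =
      ∑ z : HWBasis n k, (if C (dflip a b z.1) then F (dflip a b z.1) else 0) := by
  have conv : ∀ (G : QState n → Matrix (HWBasis n k) (HWBasis n k) ℂ),
      ∑ x : HWBasis n k, G x.1 = ∑ s ∈ Finset.univ.filter (fun s => wt s = k), G s := by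
    intro G
    exact (Finset.sum_subtype (s := Finset.univ.filter (fun s => wt s = k))
      (p := fun s => wt s = k) (fun x => by simp) G).symm
  rw [conv (fun s => if C s then F s else 0), conv (fun s => if C (dflip a b s) then
    F (dflip a b s) else 0)]
  rw [Finset.sum_filter, Finset.sum_filter]
  have hbij : Function.Bijective (dflip a b : QState n → QState n) :=
    Function.Involutive.bijective (fun s => dflip_dflip a b s)
  rw [← Fintype.sum_bijective (dflip a b) hbij _ _ (fun s => rfl)]
  apply Finset.sum_congr rfl
  intro s _
  by_cases hCs : C (dflip a b s)
  · have hwt : wt (dflip a b s) = wt s := by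
      have := wt_dflip hab (hC _ hCs)
      rw [dflip_dflip] at this
      exact this.symm
    simp [hCs, hwt]
  · simp [hCs]

/-- The key structural bracket identity for conditioned hopping generators. -/
lemma condB_lie (p q r : Fin n) (hpq : p ≠ q) (hqr : q ≠ r) (hpr : p ≠ r)
    (P : QState n → Prop) [DecidablePred P]
    (hP : ∀ (m : Fin n) (b : QState n), (m = p ∨ m = q ∨ m = r) → (P (flipBit m b) ↔ P b)) :
    ⁅condB n k p q P, condB n k q r P⁆ =
      condB n k p r (fun b => P b ∧ b q = 0) - condB n k p r (fun b => P b ∧ b q = 1) := by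
  have hPpq : ∀ x, P (dflip p q x) ↔ P x := fun x =>
    (hP p _ (Or.inl rfl)).trans (hP q x (Or.inr (Or.inl rfl)))
  have hPqr : ∀ x, P (dflip q r x) ↔ P x := fun x =>
    (hP q _ (Or.inr (Or.inl rfl))).trans (hP r x (Or.inr (Or.inr rfl)))
  rw [condB, condB, lie_sum_sum]
  -- termwise bracket formula
  have key : ∀ x y : HWBasis n k,
      ⁅(if x.1 p = 0 ∧ x.1 q = 1 ∧ P x.1 then Araw n k (dflip p q x.1) x.1 else 0),
       (if y.1 q = 0 ∧ y.1 r = 1 ∧ P y.1 then Araw n k (dflip q r y.1) y.1 else 0)⁆ =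
      (if (x.1 p = 0 ∧ x.1 q = 1 ∧ P x.1) ∧ (y.1 q = 0 ∧ y.1 r = 1 ∧ P y.1) ∧
          x.1 = dflip q r y.1 then Araw n k (dflip p q x.1) y.1 else 0)
      + (if (x.1 p = 0 ∧ x.1 q = 1 ∧ P x.1) ∧ (y.1 q = 0 ∧ y.1 r = 1 ∧ P y.1) ∧
          dflip p q x.1 = y.1 then Araw n k x.1 (dflip q r y.1) else 0) := by
    intro x y
    by_cases h1 : x.1 p = 0 ∧ x.1 q = 1 ∧ P x.1
    · by_cases h2 : y.1 q = 0 ∧ y.1 r = 1 ∧ P y.1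
      · rw [if_pos h1, if_pos h2]
        have wa : wt (dflip p q x.1) = k := by
          rw [wt_dflip hpq (fin2_ne_of_eq01 h1.1 h1.2.1)]; exact x.2
        have wc : wt (dflip q r y.1) = k := by
          rw [wt_dflip hqr (fin2_ne_of_eq01 h2.1 h2.2.1)]; exact y.2
        rw [lie_Araw wa x.2 wc y.2]
        have hbd : ¬(x.1 = y.1) := fun h => by
          have := h1.2.1; rw [h, h2.1] at this; exact absurd this (by decide)
        have hac : ¬(dflip p q x.1 = dflip q r y.1) := fun h => by
          have e1 : dflip p q x.1 q = 0 := by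
            rw [dflip_apply_q hpq, fin2_one_sub_eq_zero]; exact h1.2.1
          have e2 : dflip q r y.1 q = 1 := by
            rw [dflip_apply_p hqr, fin2_one_sub_eq_one]; exact h2.1
          rw [h, e2] at e1; exact absurd e1 (by decide)
        rw [if_neg hbd, if_neg hac, add_zero, add_zero]
        simp only [iff_true_intro h1, iff_true_intro h2, true_and]
      · rw [if_neg h2]
        simp only [lie_zero]
        rw [if_neg (fun h => h2 h.2.1), if_neg (fun h => h2 h.2.1), add_zero]
    · rw [if_neg h1]
      simp only [zero_lie]
      rw [if_neg (fun h => h1 h.1), if_neg (fun h => h1 h.1), add_zero]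
  rw [Finset.sum_congr rfl (fun x _ => Finset.sum_congr rfl (fun y _ => key x y))]
  rw [Finset.sum_congr rfl (fun x _ => Finset.sum_add_distrib), Finset.sum_add_distrib]
  have hS1 : (∑ x : HWBasis n k, ∑ y : HWBasis n k,
      if (x.1 p = 0 ∧ x.1 q = 1 ∧ P x.1) ∧ (y.1 q = 0 ∧ y.1 r = 1 ∧ P y.1) ∧
          x.1 = dflip q r y.1 then Araw n k (dflip p q x.1) y.1 else 0) =
      condB n k p r (fun b => P b ∧ b q = 0) := by
    have inner1 : ∀ x : HWBasis n k, (∑ y : HWBasis n k,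
        if (x.1 p = 0 ∧ x.1 q = 1 ∧ P x.1) ∧ (y.1 q = 0 ∧ y.1 r = 1 ∧ P y.1) ∧
            x.1 = dflip q r y.1 then Araw n k (dflip p q x.1) y.1 else 0) =
        (if x.1 p = 0 ∧ x.1 q = 1 ∧ (P x.1 ∧ x.1 r = 0) then
          Araw n k (dflip p q x.1) (dflip q r x.1) else 0) := by
      intro x
      have step : ∀ y : HWBasis n k,
          (if (x.1 p = 0 ∧ x.1 q = 1 ∧ P x.1) ∧ (y.1 q = 0 ∧ y.1 r = 1 ∧ P y.1) ∧
              x.1 = dflip q r y.1 then Araw n k (dflip p q x.1) y.1 else 0) =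
          (if y.1 = dflip q r x.1 then
            (if (x.1 p = 0 ∧ x.1 q = 1 ∧ P x.1) ∧ (y.1 q = 0 ∧ y.1 r = 1 ∧ P y.1) then
              Araw n k (dflip p q x.1) y.1 else 0) else 0) := by
        intro y
        by_cases hy : y.1 = dflip q r x.1
        · rw [if_pos hy]
          exact if_congr (by
            have : x.1 = dflip q r y.1 := (dflip_eq_comm q r y.1 x.1).mp hy
            tauto) rfl rfl
        · rw [if_neg hy, if_neg (fun h => hy ((dflip_eq_comm q r x.1 y.1).mp h.2.2))]
      rw [Finset.sum_congr rfl (fun y _ => step y), sum_subtype_ite (dflip q r x.1)]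
      by_cases hc : x.1 p = 0 ∧ x.1 q = 1 ∧ (P x.1 ∧ x.1 r = 0)
      · have hw : wt (dflip q r x.1) = k := by
          rw [wt_dflip hqr (Ne.symm (fin2_ne_of_eq01 hc.2.2.2 hc.2.1))]; exact x.2
        rw [dif_pos hw, if_pos hc, if_pos]
        refine ⟨⟨hc.1, hc.2.1, hc.2.2.1⟩, ?_, ?_, ?_⟩
        · show dflip q r x.1 q = 0
          rw [dflip_apply_p hqr, hc.2.1]; decide
        · show dflip q r x.1 r = 1
          rw [dflip_apply_q hqr, hc.2.2.2]; decide
        · show P (dflip q r x.1)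
          exact (hPqr x.1).mpr hc.2.2.1
      · rw [if_neg hc]
        by_cases hw : wt (dflip q r x.1) = k
        · rw [dif_pos hw, if_neg]
          rintro ⟨h1, h2⟩
          refine hc ⟨h1.1, h1.2.1, h1.2.2, ?_⟩
          have h22 : dflip q r x.1 r = 1 := h2.2.1
          rw [dflip_apply_q hqr, fin2_one_sub_eq_one] at h22
          exact h22
        · rw [dif_neg hw]
    rw [Finset.sum_congr rfl (fun x _ => inner1 x)]
    rw [sum_reindex_dflip hqr
      (fun s => Araw n k (dflip p q s) (dflip q r s))
      (fun s => s p = 0 ∧ s q = 1 ∧ (P s ∧ s r = 0))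
      (fun s hs => fin2_ne_of_eq01 hs.2.2.2 hs.2.1 ∘ Eq.symm)]
    rw [condB]
    apply Finset.sum_congr rfl
    intro z _
    have e1 : dflip q r z.1 p = z.1 p := dflip_apply_ne hpq hpr z.1
    have e2 : dflip q r z.1 q = 1 - z.1 q := dflip_apply_p hqr z.1
    have e3 : dflip q r z.1 r = 1 - z.1 r := dflip_apply_q hqr z.1
    refine if_congr ?_ ?_ rfl
    · rw [e1, e2, e3, fin2_one_sub_eq_one, fin2_one_sub_eq_zero, hPqr]
      tauto
    · rw [dflip_dflip_cancel_left, dflip_dflip]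
  have hS2 : (∑ x : HWBasis n k, ∑ y : HWBasis n k,
      if (x.1 p = 0 ∧ x.1 q = 1 ∧ P x.1) ∧ (y.1 q = 0 ∧ y.1 r = 1 ∧ P y.1) ∧
          dflip p q x.1 = y.1 then Araw n k x.1 (dflip q r y.1) else 0) =
      -condB n k p r (fun b => P b ∧ b q = 1) := by
    have inner2 : ∀ x : HWBasis n k, (∑ y : HWBasis n k,
        if (x.1 p = 0 ∧ x.1 q = 1 ∧ P x.1) ∧ (y.1 q = 0 ∧ y.1 r = 1 ∧ P y.1) ∧
            dflip p q x.1 = y.1 then Araw n k x.1 (dflip q r y.1) else 0) =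
        (if x.1 p = 0 ∧ x.1 r = 1 ∧ ((P x.1 ∧ x.1 q = 1)) then
          -Araw n k (dflip p r x.1) x.1 else 0) := by
      intro x
      have step : ∀ y : HWBasis n k,
          (if (x.1 p = 0 ∧ x.1 q = 1 ∧ P x.1) ∧ (y.1 q = 0 ∧ y.1 r = 1 ∧ P y.1) ∧
              dflip p q x.1 = y.1 then Araw n k x.1 (dflip q r y.1) else 0) =
          (if y.1 = dflip p q x.1 then
            (if (x.1 p = 0 ∧ x.1 q = 1 ∧ P x.1) ∧ (y.1 q = 0 ∧ y.1 r = 1 ∧ P y.1) then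
              Araw n k x.1 (dflip q r y.1) else 0) else 0) := by
        intro y
        by_cases hy : y.1 = dflip p q x.1
        · rw [if_pos hy]
          exact if_congr (by tauto) rfl rfl
        · rw [if_neg hy, if_neg (fun h => hy h.2.2.symm)]
      rw [Finset.sum_congr rfl (fun y _ => step y), sum_subtype_ite (dflip p q x.1)]
      by_cases hc : x.1 p = 0 ∧ x.1 r = 1 ∧ (P x.1 ∧ x.1 q = 1)
      · have hw : wt (dflip p q x.1) = k := by
          rw [wt_dflip hpq (fin2_ne_of_eq01 hc.1 hc.2.2.2)]; exact x.2
        rw [dif_pos hw, if_pos hc, if_pos]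
        · rw [dflip_dflip_cancel_right, Araw_symm]
        refine ⟨⟨hc.1, hc.2.2.2, hc.2.2.1⟩, ?_, ?_, ?_⟩
        · show dflip p q x.1 q = 0
          rw [dflip_apply_q hpq, hc.2.2.2]; decide
        · show dflip p q x.1 r = 1
          rw [dflip_apply_ne (Ne.symm hpr) (Ne.symm hqr)]; exact hc.2.1
        · show P (dflip p q x.1)
          exact (hPpq x.1).mpr hc.2.2.1
      · rw [if_neg hc]
        by_cases hw : wt (dflip p q x.1) = k
        · rw [dif_pos hw, if_neg]
          rintro ⟨h1, h2⟩
          refine hc ⟨h1.1, ?_, h1.2.2, h1.2.1⟩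
          have h22 : dflip p q x.1 r = 1 := h2.2.1
          rw [dflip_apply_ne (Ne.symm hpr) (Ne.symm hqr)] at h22
          exact h22
        · rw [dif_neg hw]
    rw [Finset.sum_congr rfl (fun x _ => inner2 x)]
    rw [condB, ← Finset.sum_neg_distrib]
    apply Finset.sum_congr rfl
    intro z _
    rw [apply_ite Neg.neg, neg_zero]
  rw [hS1, hS2, sub_eq_add_neg]

end BracketIdentity
section Membership

variable {n k : ℕ}

/-- The generator set of the theorem. -/
def Gset (n k : ℕ) : Set (Matrix (HWBasis n k) (HWBasis n k) ℂ) :=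
  {M | ∃ p q : Fin n, p ≠ q ∧ M = restrict k (opJ p q)}

lemma condB_split (p q a : Fin n) (P : QState n → Prop) [DecidablePred P] :
    condB n k p q P =
      condB n k p q (fun b => P b ∧ b a = 0) + condB n k p q (fun b => P b ∧ b a = 1) := by
  rw [condB, condB, condB, ← Finset.sum_add_distrib]
  apply Finset.sum_congr rfl
  intro y _
  have g01 : ((0 : Fin 2) = 1) ↔ False := by decide
  have g10 : ((1 : Fin 2) = 0) ↔ False := by decide
  rcases fin2_cases (y.1 a) with ha | ha <;> simp [ha, g01, g10]

lemma condB_mem (T : Finset (Fin n)) :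
    ∀ p q : Fin n, p ≠ q → p ∉ T → q ∉ T → ∀ c : QState n,
      condB n k p q (fun b => ∀ t ∈ T, b t = c t) ∈ DLA (Gset n k) := by
  induction T using Finset.induction_on with
  | empty =>
    intro p q hpq _ _ c
    have : condB n k p q (fun b => ∀ t ∈ (∅ : Finset (Fin n)), b t = c t) =
        condB n k p q (fun _ => True) := condB_congr (by simp)
    rw [this, ← I_smul_restrict_opJ hpq]
    exact LieSubalgebra.subset_lieSpan ⟨restrict k (opJ p q), ⟨p, q, hpq, rfl⟩, rfl⟩
  | @insert a T haT ih =>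
    intro p q hpq hpT hqT c
    have hpa : p ≠ a := fun h => hpT (h ▸ Finset.mem_insert_self a T)
    have hqa : q ≠ a := fun h => hqT (h ▸ Finset.mem_insert_self a T)
    have hp' : p ∉ T := fun h => hpT (Finset.mem_insert_of_mem h)
    have hq' : q ∉ T := fun h => hqT (Finset.mem_insert_of_mem h)
    set P : QState n → Prop := fun b => ∀ t ∈ T, b t = c t with hPdef
    have hPinv : ∀ (m : Fin n) (b : QState n), (m = p ∨ m = a ∨ m = q) →
        (P (flipBit m b) ↔ P b) := by
      intro m b hm
      have hmT : m ∉ T := by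
        rcases hm with h | h | h <;> subst h <;> assumption
      constructor
      · intro h t ht
        have h2 := h t ht
        rwa [flipBit_apply_ne m t b (fun e => hmT (e ▸ ht))] at h2
      · intro h t ht
        rw [flipBit_apply_ne m t b (fun e => hmT (e ▸ ht))]
        exact h t ht
    have hlie := condB_lie (n := n) (k := k) p a q hpa (Ne.symm hqa) hpq P hPinv
    have hsplit := condB_split (n := n) (k := k) p q a P
    have hS : condB n k p q P ∈ DLA (Gset n k) := ih p q hpq hp' hq' c
    have hL : ⁅condB n k p a P, condB n k a q P⁆ ∈ DLA (Gset n k) :=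
      (DLA (Gset n k)).lie_mem (ih p a hpa hp' haT c) (ih a q (Ne.symm hqa) haT hq' c)
    have heq : ∀ b : QState n, (∀ t ∈ insert a T, b t = c t) ↔ (P b ∧ b a = c a) := by
      intro b
      constructor
      · intro h
        exact ⟨fun t ht => h t (Finset.mem_insert_of_mem ht), h a (Finset.mem_insert_self a T)⟩
      · rintro ⟨h1, h2⟩ t ht
        rcases Finset.mem_insert.mp ht with h | h
        · subst h; exact h2
        · exact h1 t h
    rw [condB_congr heq]
    rcases fin2_cases (c a) with hca | hca <;> rw [hca]
    · have : condB n k p q (fun b => P b ∧ b a = 0) =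
          (1/2 : ℝ) • (condB n k p q P + ⁅condB n k p a P, condB n k a q P⁆) := by
        rw [hlie, hsplit]
        module
      rw [this]
      exact (DLA (Gset n k)).smul_mem _ ((DLA (Gset n k)).add_mem hS hL)
    · have : condB n k p q (fun b => P b ∧ b a = 1) =
          (1/2 : ℝ) • (condB n k p q P - ⁅condB n k p a P, condB n k a q P⁆) := by
        rw [hlie, hsplit]
        module
      rw [this]
      exact (DLA (Gset n k)).smul_mem _ ((DLA (Gset n k)).sub_mem hS hL)

lemma Araw_pair_mem {v : QState n} (hv : wt v = k) {p q : Fin n} (hpq : p ≠ q)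
    (h0 : v p = 0) (h1 : v q = 1) :
    Araw n k (dflip p q v) v ∈ DLA (Gset n k) := by
  classical
  set T : Finset (Fin n) := Finset.univ \ {p, q} with hT
  have hpT : p ∉ T := by simp [hT]
  have hqT : q ∉ T := by simp [hT]
  have hmem := condB_mem (n := n) (k := k) T p q hpq hpT hqT v
  have : condB n k p q (fun b => ∀ t ∈ T, b t = v t) = Araw n k (dflip p q v) v := by
    rw [condB]
    have step : ∀ y : HWBasis n k,
        (if y.1 p = 0 ∧ y.1 q = 1 ∧ (∀ t ∈ T, y.1 t = v t) then
          Araw n k (dflip p q y.1) y.1 else 0) =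
        (if y.1 = v then Araw n k (dflip p q y.1) y.1 else 0) := by
      intro y
      refine if_congr ?_ rfl rfl
      constructor
      · rintro ⟨hp, hq, hrest⟩
        funext i
        by_cases hip : i = p
        · subst hip; rw [hp, h0]
        · by_cases hiq : i = q
          · subst hiq; rw [hq, h1]
          · exact hrest i (by simp [hT, hip, hiq])
      · intro h
        rw [h]
        exact ⟨h0, h1, fun t _ => rfl⟩
    rw [Finset.sum_congr rfl (fun y _ => step y), sum_subtype_ite v, dif_pos hv]
  rwa [this] at hmem

lemma exists_zero_one {u v : QState n} (hw : wt u = wt v) (huv : u ≠ v) :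
    ∃ i, u i = 0 ∧ v i = 1 := by
  by_contra hno
  push_neg at hno
  have hle : ∀ i, (v i : ℕ) ≤ (u i : ℕ) := by
    intro i
    rcases fin2_cases (u i) with h | h
    · rcases fin2_cases (v i) with h' | h'
      · rw [h, h']
      · exact absurd h' (hno i h)
    · rcases fin2_cases (v i) with h' | h' <;> rw [h, h'] <;> norm_num
  obtain ⟨j, hj⟩ : ∃ j, u j ≠ v j := by
    by_contra hall
    push_neg at hall
    exact huv (funext hall)
  have hlt : (v j : ℕ) < (u j : ℕ) := by
    rcases fin2_cases (u j) with h | h <;> rcases fin2_cases (v j) with h' | h' <;>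
      rw [h, h'] <;> first
        | (exfalso; rw [h, h'] at hj; exact hj rfl)
        | (exfalso; exact absurd h' (hno j h))
        | norm_num
  have : wt v < wt u := Finset.sum_lt_sum (fun i _ => hle i) ⟨j, Finset.mem_univ j, hlt⟩
  omega

lemma Araw_mem_aux : ∀ d : ℕ, ∀ u v : QState n,
    (Finset.univ.filter (fun i => u i ≠ v i)).card = d →
    wt u = k → wt v = k → u ≠ v → Araw n k u v ∈ DLA (Gset n k) := by
  intro d
  induction d using Nat.strong_induction_on with
  | _ d ihd =>
  intro u v hcard hu hv huv
  have hwuv : wt u = wt v := hu.trans hv.symm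
  obtain ⟨q, huq, hvq⟩ := exists_zero_one hwuv huv
  obtain ⟨p, hvp, hup⟩ := exists_zero_one hwuv.symm (Ne.symm huv)
  have hpq : p ≠ q := by
    intro h
    rw [h, huq] at hup
    exact absurd hup (by decide)
  set w : QState n := dflip p q u with hwdef
  have hww : wt w = k := by
    rw [hwdef, wt_dflip hpq (by rw [hup, huq]; decide)]
    exact hu
  have hwp : w p = 0 := by rw [hwdef, dflip_apply_p hpq, hup]; decide
  have hwq : w q = 1 := by rw [hwdef, dflip_apply_q hpq, huq]; decide
  have hAuw : Araw n k u w ∈ DLA (Gset n k) := by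
    have := Araw_pair_mem hww hpq hwp hwq
    rwa [hwdef, dflip_dflip] at this
  have huw : u ≠ w := by
    intro h
    rw [← h] at hwp
    rw [hup] at hwp
    exact absurd hwp (by decide)
  by_cases hwv : w = v
  · rwa [← hwv]
  · -- induction on the number of disagreements
    have hpD : p ∈ Finset.univ.filter (fun i => u i ≠ v i) := by
      simp only [Finset.mem_filter, Finset.mem_univ, true_and]
      rw [hup, hvp]; decide
    have hDw : (Finset.univ.filter (fun i => w i ≠ v i)) =
        ((Finset.univ.filter (fun i => u i ≠ v i)).erase p).erase q := by
      ext i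
      simp only [Finset.mem_filter, Finset.mem_univ, true_and, Finset.mem_erase]
      by_cases hip : i = p
      · subst hip
        rw [hwp, hvp]
        simp
      · by_cases hiq : i = q
        · subst hiq
          rw [hwq, hvq]
          simp
        · rw [hwdef, dflip_apply_ne hip hiq]
          simp [hip, hiq]
    have hlt : (Finset.univ.filter (fun i => w i ≠ v i)).card < d := by
      rw [hDw, ← hcard]
      calc (((Finset.univ.filter (fun i => u i ≠ v i)).erase p).erase q).card
          ≤ ((Finset.univ.filter (fun i => u i ≠ v i)).erase p).card :=
            Finset.card_erase_le
        _ < (Finset.univ.filter (fun i => u i ≠ v i)).card :=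
            Finset.card_erase_lt_of_mem hpD
    have hAwv : Araw n k w v ∈ DLA (Gset n k) :=
      ihd _ hlt w v rfl hww hv hwv
    have hbr : ⁅Araw n k u w, Araw n k w v⁆ = Araw n k u v := by
      rw [lie_Araw hu hww hww hv, if_pos rfl, if_neg huv, if_neg hwv,
        if_neg huw]
      simp
    rw [← hbr]
    exact (DLA (Gset n k)).lie_mem hAuw hAwv

lemma Araw_mem {u v : QState n} (hu : wt u = k) (hv : wt v = k) :
    Araw n k u v ∈ DLA (Gset n k) := by
  by_cases huv : u = v
  · rw [huv, Araw_self]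
    exact (DLA (Gset n k)).zero_mem
  · exact Araw_mem_aux _ u v rfl hu hv huv

end Membership
section Span

variable (n k : ℕ)

/-- The `A` matrices indexed by pairs of weight-`k` basis labels. -/
def pairA (p : HWBasis n k × HWBasis n k) : Matrix (HWBasis n k) (HWBasis n k) ℂ :=
  Araw n k p.1.1 p.2.1

/-- The candidate for the DLA: the real span of all the `A` matrices. -/
def SO : Submodule ℝ (Matrix (HWBasis n k) (HWBasis n k) ℂ) :=
  Submodule.span ℝ (Set.range (pairA n k))

variable {n k}

lemma pairA_mem_SO (u v : HWBasis n k) : Araw n k u.1 v.1 ∈ SO n k :=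
  Submodule.subset_span ⟨(u, v), rfl⟩

lemma lie_pairA_mem (u v : HWBasis n k × HWBasis n k) :
    ⁅pairA n k u, pairA n k v⁆ ∈ SO n k := by
  rw [pairA, pairA, lie_Araw u.1.2 u.2.2 v.1.2 v.2.2]
  refine Submodule.add_mem _ (Submodule.add_mem _ (Submodule.add_mem _ ?_ ?_) ?_) ?_ <;>
    (split_ifs with h
     exacts [pairA_mem_SO _ _, Submodule.zero_mem _])

lemma lie_mem_SO {x y : Matrix (HWBasis n k) (HWBasis n k) ℂ}
    (hx : x ∈ SO n k) (hy : y ∈ SO n k) : ⁅x, y⁆ ∈ SO n k := by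
  induction hx using Submodule.span_induction with
  | mem x hxg =>
    obtain ⟨u, rfl⟩ := hxg
    induction hy using Submodule.span_induction with
    | mem y hyg =>
      obtain ⟨v, rfl⟩ := hyg
      exact lie_pairA_mem u v
    | zero => rw [lie_zero]; exact Submodule.zero_mem _
    | add y z _ _ h1 h2 => rw [lie_add]; exact Submodule.add_mem _ h1 h2
    | smul a y _ h1 => rw [lie_smul]; exact Submodule.smul_mem _ a h1
  | zero => rw [zero_lie]; exact Submodule.zero_mem _
  | add x z _ _ h1 h2 => rw [add_lie]; exact Submodule.add_mem _ h1 h2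
  | smul a x _ h1 => rw [smul_lie]; exact Submodule.smul_mem _ a h1

variable (n k)

/-- The candidate DLA as a Lie subalgebra. -/
def SOLie : LieSubalgebra ℝ (Matrix (HWBasis n k) (HWBasis n k) ℂ) :=
  ⟨SO n k, fun hx hy => lie_mem_SO hx hy⟩

variable {n k}

lemma gen_mem_SOLie {M : Matrix (HWBasis n k) (HWBasis n k) ℂ} (hM : M ∈ Gset n k) :
    Complex.I • M ∈ SOLie n k := by
  obtain ⟨p, q, hpq, rfl⟩ := hM
  rw [I_smul_restrict_opJ hpq, condB]
  apply Submodule.sum_mem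
  intro y _
  by_cases hc : y.1 p = 0 ∧ y.1 q = 1 ∧ True
  · rw [if_pos hc]
    have hw : wt (dflip p q y.1) = k := by
      rw [wt_dflip hpq (fin2_ne_of_eq01 hc.1 hc.2.1)]; exact y.2
    exact pairA_mem_SO ⟨dflip p q y.1, hw⟩ y
  · rw [if_neg hc]; exact Submodule.zero_mem _

lemma DLA_eq_SOLie : DLA (Gset n k) = SOLie n k := by
  apply le_antisymm
  · rw [DLA, LieSubalgebra.lieSpan_le]
    rintro M ⟨M', hM', rfl⟩
    exact gen_mem_SOLie hM'
  · intro M hM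
    have hM' : M ∈ SO n k := hM
    clear hM
    induction hM' using Submodule.span_induction with
    | mem x hxg =>
      obtain ⟨u, rfl⟩ := hxg
      exact Araw_mem u.1.2 u.2.2
    | zero => exact (DLA (Gset n k)).zero_mem
    | add x z _ _ h1 h2 => exact (DLA (Gset n k)).add_mem h1 h2
    | smul a x _ h1 => exact (DLA (Gset n k)).smul_mem a h1

end Span
section Dimension

variable {n k : ℕ}

lemma wt_eq_card (b : QState n) :
    wt b = (Finset.univ.filter (fun i => b i = 1)).card := by
  rw [Finset.card_filter, wt]
  apply Finset.sum_congr rfl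
  intro i _
  rcases fin2_cases (b i) with h | h <;> rw [h] <;> decide

/-- Weight-`k` bit strings correspond to `k`-element subsets. -/
def hwEquiv (n k : ℕ) : HWBasis n k ≃ {s : Finset (Fin n) // s.card = k} where
  toFun b := ⟨Finset.univ.filter (fun i => b.1 i = 1), by rw [← wt_eq_card, b.2]⟩
  invFun s := ⟨fun i => if i ∈ s.1 then 1 else 0, by
    rw [wt_eq_card]
    rw [show Finset.univ.filter (fun i => (if i ∈ s.1 then (1 : Fin 2) else 0) = 1) = s.1 by
      ext i
      simp only [Finset.mem_filter, Finset.mem_univ, true_and]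
      by_cases h : i ∈ s.1 <;> simp [h]]
    exact s.2⟩
  left_inv b := by
    apply Subtype.ext
    funext i
    simp only [Finset.mem_filter, Finset.mem_univ, true_and]
    rcases fin2_cases (b.1 i) with h | h <;> simp [h]
  right_inv s := by
    apply Subtype.ext
    ext i
    simp only [Finset.mem_filter, Finset.mem_univ, true_and]
    by_cases h : i ∈ s.1 <;> simp [h]

lemma card_HWBasis (n k : ℕ) : Fintype.card (HWBasis n k) = n.choose k := by
  rw [Fintype.card_congr (hwEquiv n k), Fintype.card_finset_len, Fintype.card_fin]

/-- Pairs `i < j` in `Fin D` correspond to a sigma type. -/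
def ltEquiv (D : ℕ) : {p : Fin D × Fin D // p.1 < p.2} ≃ Σ j : Fin D, Fin j.1 where
  toFun x := ⟨x.1.2, ⟨x.1.1.1, x.2⟩⟩
  invFun s := ⟨(⟨s.2.1, lt_trans s.2.2 s.1.2⟩, s.1), s.2.2⟩
  left_inv := by rintro ⟨⟨a, b⟩, h⟩; rfl
  right_inv := by rintro ⟨j, i⟩; rfl

lemma card_ltPairs (D : ℕ) :
    Fintype.card {p : Fin D × Fin D // p.1 < p.2} = D * (D - 1) / 2 := by
  rw [Fintype.card_congr (ltEquiv D), Fintype.card_sigma]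
  simp only [Fintype.card_fin]
  rw [show (∑ j : Fin D, (j.1 : ℕ)) = ∑ i ∈ Finset.range D, i from
    Fin.sum_univ_eq_sum_range (fun i => i) D]
  exact Finset.sum_range_id D

variable (n k)

/-- An enumeration of the weight-`k` basis. -/
noncomputable def eFin : HWBasis n k ≃ Fin (Fintype.card (HWBasis n k)) :=
  Fintype.equivFin _

/-- A basis family for the DLA. -/
noncomputable def fam (j : {p : Fin (Fintype.card (HWBasis n k)) ×
    Fin (Fintype.card (HWBasis n k)) // p.1 < p.2}) :
    Matrix (HWBasis n k) (HWBasis n k) ℂ :=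
  Araw n k ((eFin n k).symm j.1.1).1 ((eFin n k).symm j.1.2).1

lemma span_fam : Submodule.span ℝ (Set.range (fam n k)) = SO n k := by
  apply le_antisymm
  · rw [Submodule.span_le]
    rintro M ⟨j, rfl⟩
    exact pairA_mem_SO _ _
  · rw [SO, Submodule.span_le]
    rintro M ⟨u, rfl⟩
    rcases lt_trichotomy ((eFin n k) u.1) ((eFin n k) u.2) with h | h | h
    · have : pairA n k u = fam n k ⟨((eFin n k) u.1, (eFin n k) u.2), h⟩ := by
        rw [pairA, fam]
        simp [Equiv.symm_apply_apply]
      rw [this]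
      exact Submodule.subset_span ⟨_, rfl⟩
    · have : u.1 = u.2 := (eFin n k).injective h
      rw [pairA, this, Araw_self]
      exact Submodule.zero_mem _
    · have : pairA n k u = -fam n k ⟨((eFin n k) u.2, (eFin n k) u.1), h⟩ := by
        rw [pairA, fam]
        simp only [Equiv.symm_apply_apply]
        rw [← Araw_symm]
      rw [this]
      exact Submodule.neg_mem _ (Submodule.subset_span ⟨_, rfl⟩)

lemma fam_entry (j i : {p : Fin (Fintype.card (HWBasis n k)) ×
    Fin (Fintype.card (HWBasis n k)) // p.1 < p.2}) :
    fam n k i ((eFin n k).symm j.1.1) ((eFin n k).symm j.1.2) =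
      if i = j then 1 else 0 := by
  rw [fam, Araw, Eraw, Eraw, Matrix.sub_apply, Matrix.of_apply, Matrix.of_apply]
  have hsub : ∀ a b : Fin (Fintype.card (HWBasis n k)),
      (((eFin n k).symm a).1 = ((eFin n k).symm b).1) ↔ a = b := by
    intro a b
    constructor
    · intro h
      exact (eFin n k).symm.injective (Subtype.ext h)
    · rintro rfl; rfl
  have hC2 : ¬(((eFin n k).symm j.1.1).1 = ((eFin n k).symm i.1.2).1 ∧
      ((eFin n k).symm j.1.2).1 = ((eFin n k).symm i.1.1).1) := by
    rintro ⟨h1, h2⟩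
    rw [hsub] at h1 h2
    have h3 : j.1.1 < j.1.2 := j.2
    rw [h1, h2] at h3
    exact absurd h3 (lt_asymm i.2)
  by_cases hij : i = j
  · subst hij
    rw [if_pos rfl, if_pos ⟨(hsub _ _).mpr rfl, (hsub _ _).mpr rfl⟩, if_neg hC2]
    norm_num
  · have hC1 : ¬(((eFin n k).symm j.1.1).1 = ((eFin n k).symm i.1.1).1 ∧
        ((eFin n k).symm j.1.2).1 = ((eFin n k).symm i.1.2).1) := by
      rintro ⟨h1, h2⟩
      rw [hsub] at h1 h2
      exact hij (Subtype.ext (Prod.ext h1.symm h2.symm))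
    rw [if_neg hij, if_neg hC1, if_neg hC2]
    norm_num

lemma fam_indep : LinearIndependent ℝ (fam n k) := by
  rw [Fintype.linearIndependent_iff]
  intro g hg j
  have h2 : (∑ i, g i • fam n k i) ((eFin n k).symm j.1.1) ((eFin n k).symm j.1.2) = 0 := by
    rw [hg]; rfl
  rw [Matrix.sum_apply] at h2
  have h3 : ∀ i, (g i • fam n k i) ((eFin n k).symm j.1.1) ((eFin n k).symm j.1.2) =
      (if i = j then g i • (1 : ℂ) else 0) := by
    intro i
    rw [Matrix.smul_apply, fam_entry, smul_ite, smul_zero]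
  rw [Finset.sum_congr rfl (fun i _ => h3 i), Finset.sum_ite_eq' Finset.univ j] at h2
  simp only [Finset.mem_univ, if_true] at h2
  have h4 : ((g j : ℝ) : ℂ) = 0 := by
    rw [← h2, Complex.real_smul, mul_one]
  exact_mod_cast h4

lemma finrank_SO : Module.finrank ℝ (SO n k) = n.choose k * (n.choose k - 1) / 2 := by
  rw [← span_fam, finrank_span_eq_card (fam_indep n k), card_ltPairs, card_HWBasis]

end Dimension
/-- The DLA generated by all `J̃_{pq}` has dimension `d_k(d_k−1)/2` (type III). -/
theorem dla_J_dim (n k : ℕ) (hn : 2 ≤ n) (hk1 : 1 ≤ k) (hk2 : k ≤ n - 1) :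
    dlaDim {M : Matrix (HWBasis n k) (HWBasis n k) ℂ |
        ∃ p q : Fin n, p ≠ q ∧ M = restrict k (opJ p q)} =
      n.choose k * (n.choose k - 1) / 2 := by
  have hset : {M : Matrix (HWBasis n k) (HWBasis n k) ℂ |
      ∃ p q : Fin n, p ≠ q ∧ M = restrict k (opJ p q)} = Gset n k := rfl
  rw [hset, dlaDim, DLA_eq_SOLie]
  exact finrank_SO n k
end
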